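/- For a semisimple Lie algebra 𝔰 over a field of characteristic zero and a full 𝔰-module 𝔳, the semidirect product Lie algebra 𝔰 ⋉ 𝔥(𝔳) is perfect, i.e. equals its own derived subalgebra. -/

import Mathlib

attribute [local instance 100] LieRing.ofAssociativeRing

/-- The space of `𝔰`-invariant alternating bilinear forms on a module `V` with
`𝔰`-action given by `ρ`. -/
def altInv (K S V : Type*) [Field K] [LieRing S] [LieAlgebra K S]
    [AddCommGroup V] [Module K V] (ρ : S →ₗ⁅K⁆ Module.End K V) :
    Submodule K (V →ₗ[K] V →ₗ[K] K) where
  carrier := {φ | (∀ x, φ x x = 0) ∧ ∀ (s : S) (x y : V), φ (ρ s x) y + φ x (ρ s y) = 0}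
  add_mem' := by
    rintro a b ⟨ha1, ha2⟩ ⟨hb1, hb2⟩
    refine ⟨fun x => ?_, fun s x y => ?_⟩
    · simp [ha1 x, hb1 x]
    · simp only [LinearMap.add_apply]
      linear_combination ha2 s x y + hb2 s x y
  zero_mem' := by
    refine ⟨fun x => rfl, fun s x y => ?_⟩
    simp
  smul_mem' := by
    rintro c a ⟨ha1, ha2⟩
    refine ⟨fun x => ?_, fun s x y => ?_⟩
    · simp [ha1 x]
    · simp only [LinearMap.smul_apply, smul_eq_mul]
      linear_combination c * ha2 s x y

/-- The element `e_{x,y}` of the dual of `Alt_𝔰(V)`, given by evaluation `φ ↦ φ(x,y)`. -/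
def eMap (K S V : Type*) [Field K] [LieRing S] [LieAlgebra K S]
    [AddCommGroup V] [Module K V] (ρ : S →ₗ⁅K⁆ Module.End K V) (x y : V) :
    (altInv K S V ρ) →ₗ[K] K where
  toFun φ := φ.1 x y
  map_add' a b := rfl
  map_smul' c a := rfl


private lemma semisimple_perfect (K S : Type*) [Field K] [LieRing S] [LieAlgebra K S]
    [LieAlgebra.IsSemisimple K S] :
    ⁅(⊤ : LieIdeal K S), (⊤ : LieIdeal K S)⁆ = ⊤ := by
  rw [eq_top_iff]
  conv_lhs => rw [← LieAlgebra.IsSemisimple.sSup_atoms_eq_top (R := K) (L := S)]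
  apply sSup_le
  intro I hI
  calc I = ⁅I, I⁆ := (lie_eq_self_of_isAtom_of_nonabelian I hI
            (LieAlgebra.IsSemisimple.non_abelian_of_isAtom I hI)).symm
    _ ≤ ⁅(⊤ : LieIdeal K S), (⊤ : LieIdeal K S)⁆ := LieSubmodule.mono_lie le_top le_top

/-- For a semisimple Lie algebra `𝔰` and a full `𝔰`-module `𝔳`, the
semidirect product `𝔰 ⋉ 𝔥(𝔳)` is perfect: the span of all its brackets
`[(s,h),(s',h')] = ([s,s'], s·h' - s'·h + [h,h'])` is everything. -/
theorem stmt11 (K S V : Type*) [Field K] [CharZero K] [LieRing S] [LieAlgebra K S]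
    [LieAlgebra.IsSemisimple K S] [Module.Finite K S]
    [AddCommGroup V] [Module K V] [FiniteDimensional K V]
    (ρ : S →ₗ⁅K⁆ Module.End K V)
    (hcr : ∀ p : Submodule K V, (∀ s : S, ∀ x ∈ p, ρ s x ∈ p) →
      ∃ q : Submodule K V, (∀ s : S, ∀ x ∈ q, ρ s x ∈ q) ∧ IsCompl p q)
    (hfull : ∀ x : V, (∀ s : S, ρ s x = 0) → x = 0) :
    Submodule.span K
      {z : S × (V × ((altInv K S V ρ) →ₗ[K] K)) |
        ∃ (s s' : S) (h h' : V × ((altInv K S V ρ) →ₗ[K] K)),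
          z = (⁅s, s'⁆, (ρ s h'.1 - ρ s' h.1, eMap K S V ρ h.1 h'.1))} = ⊤ := by
  set D := (altInv K S V ρ) →ₗ[K] K
  set P := Submodule.span K
      {z : S × (V × D) |
        ∃ (s s' : S) (h h' : V × D),
          z = (⁅s, s'⁆, (ρ s h'.1 - ρ s' h.1, eMap K S V ρ h.1 h'.1))} with hP
  have eMap_zero_left : ∀ y, eMap K S V ρ 0 y = 0 := by
    intro y; ext φ
    show φ.1 0 y = 0
    simp
  have eMap_zero_right : ∀ x, eMap K S V ρ x 0 = 0 := by
    intro x; ext φ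
    show φ.1 x 0 = 0
    simp
  -- Step A : (s, 0, 0) ∈ P for all s
  have hA : ∀ s : S, ((s, (0 : V × D)) : S × (V × D)) ∈ P := by
    have hsp : (⊤ : Submodule K S) ≤ P.comap (LinearMap.inl K S (V × D)) := by
      rw [← LieSubmodule.top_toSubmodule (R := K) (L := S),
        ← semisimple_perfect K S, LieSubmodule.lieIdeal_oper_eq_linear_span']
      rw [Submodule.span_le]
      rintro _ ⟨x, -, y, -, rfl⟩
      rw [SetLike.mem_coe, Submodule.mem_comap, LinearMap.inl_apply]
      apply Submodule.subset_span
      refine ⟨x, y, 0, 0, ?_⟩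
      refine Prod.ext rfl (Prod.ext (by simp) ?_)
      simp [eMap_zero_left]
    intro s
    simpa using hsp (Submodule.mem_top (x := s))
  -- Step B : (0, v, 0) ∈ P for all v
  have hB : ∀ v : V, ((0, (v, (0 : D))) : S × (V × D)) ∈ P := by
    have hgen : ∀ (s : S) (x : V), ((0, (ρ s x, (0 : D))) : S × (V × D)) ∈ P := by
      intro s x
      apply Submodule.subset_span
      refine ⟨s, 0, 0, (x, 0), ?_⟩
      simp [eMap_zero_left]
    -- the span of the ρ s x is all of V
    set p : Submodule K V := Submodule.span K {v | ∃ (s : S) (x : V), v = ρ s x} with hp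
    have hpinv : ∀ s : S, ∀ x ∈ p, ρ s x ∈ p := by
      intro s x hx
      induction hx using Submodule.span_induction with
      | mem v hv => exact Submodule.subset_span ⟨s, v, rfl⟩
      | zero => simp
      | add a b _ _ ha hb => rw [map_add]; exact Submodule.add_mem _ ha hb
      | smul c a _ ha => rw [map_smul]; exact Submodule.smul_mem _ c ha
    have hptop : p = ⊤ := by
      obtain ⟨q, hqinv, hcompl⟩ := hcr p hpinv
      have hq : q = ⊥ := by
        rw [eq_bot_iff]
        intro y hy
        have : y = 0 := by
          apply hfull
          intro s
          have h1 : ρ s y ∈ p := Submodule.subset_span ⟨s, y, rfl⟩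
          have h2 : ρ s y ∈ q := hqinv s y hy
          have := hcompl.disjoint.le_bot (Submodule.mem_inf.mpr ⟨h1, h2⟩)
          simpa using this
        simp [this]
      have := hcompl.sup_eq_top
      rw [hq, sup_bot_eq] at this
      exact this
    intro v
    have hv : v ∈ p := hptop ▸ Submodule.mem_top
    have hle : p ≤ P.comap ((LinearMap.inr K S (V × D)).comp (LinearMap.inl K V D)) := by
      rw [hp, Submodule.span_le]
      rintro _ ⟨s, x, rfl⟩
      simpa using hgen s x
    simpa using hle hv
  -- Step C : (0, 0, f) ∈ P for all f
  have hC : ∀ f : D, ((0, ((0 : V), f)) : S × (V × D)) ∈ P := by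
    set U : Submodule K D := Submodule.span K {f | ∃ x y, f = eMap K S V ρ x y} with hU
    haveI h1 : FiniteDimensional K (V →ₗ[K] V →ₗ[K] K) := inferInstance
    letI : AddCommGroup (altInv K S V ρ) :=
      Submodule.addCommGroup (R := K) (M := V →ₗ[K] V →ₗ[K] K) (altInv K S V ρ)
    haveI h2 : FiniteDimensional K (altInv K S V ρ) := set_option synthInstance.maxHeartbeats 1000000 in inferInstance
    haveI hfree : Module.Free K (altInv K S V ρ) := Module.Free.of_divisionRing K (altInv K S V ρ)
    haveI h3 : FiniteDimensional K D :=
      Module.Finite.linearMap K K (altInv K S V ρ) K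
    haveI h4 : FiniteDimensional K U := FiniteDimensional.finiteDimensional_submodule U
    have hUtop : U = ⊤ := by
      have hco : U.dualCoannihilator = ⊥ := by
        rw [eq_bot_iff]
        intro φ hφ
        rw [Submodule.mem_dualCoannihilator] at hφ
        have h0 : ∀ x y : V, φ.1 x y = 0 := fun x y =>
          hφ _ (Submodule.subset_span ⟨x, y, rfl⟩)
        have hφ0 : φ = 0 := by
          apply Subtype.ext
          ext x y
          exact h0 x y
        rw [hφ0]
        exact Submodule.zero_mem _
      calc U = U.dualCoannihilator.dualAnnihilator :=
            (Subspace.dualCoannihilator_dualAnnihilator_eq (K := K) (V := altInv K S V ρ) (W := U)).symm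
        _ = ⊤ := by rw [hco, Submodule.dualAnnihilator_bot]
    intro f
    have hf : f ∈ U := hUtop ▸ Submodule.mem_top
    have hle : U ≤ P.comap ((LinearMap.inr K S (V × D)).comp (LinearMap.inr K V D)) := by
      rw [hU, Submodule.span_le]
      rintro _ ⟨x, y, rfl⟩
      rw [SetLike.mem_coe, Submodule.mem_comap]
      simp only [LinearMap.coe_comp, Function.comp_apply, LinearMap.inr_apply]
      apply Submodule.subset_span
      exact ⟨0, 0, (x, 0), (y, 0), by simp⟩
    simpa using hle hf
  rw [eq_top_iff]
  intro z _
  obtain ⟨s, v, f⟩ := z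
  have : ((s, (v, f)) : S × (V × D)) =
      (s, (0, 0)) + (0, (v, 0)) + (0, (0, f)) := by simp
  rw [this]
  exact Submodule.add_mem _ (Submodule.add_mem _ (hA s) (hB v)) (hC f)
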